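/- Let n ≥ 2 and let p ∈ ℝ^n be a probability vector with p_y > 0 for all y. Let U : ℝ → ℝ be differentiable with U'(x) > 0 for all x, and concave. For K ∈ ℝ^n let π(K) be the unique real number with U(π(K)) = Σ_y p_y U(K_y) (which exists since U is continuous and strictly increasing and Σ_y p_y U(K_y) lies between min_y U(K_y) and max_y U(K_y)). If π is translation-invariant, i.e. π(K + a·𝟙) = π(K) + a for all a ∈ ℝ and K ∈ ℝ^n, then there exists γ ≥ 0 such that U'(x) = U'(0) e^{−γ x} for every x ∈ ℝ. -/

import Mathlib

open scoped BigOperators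

/-- A closed set containing `0` and `1` and closed under `q`-combinations contains `[0,1]`. -/
lemma aux_combo_closed {q : ℝ} (hq0 : 0 < q) (hq1 : q < 1) {C : Set ℝ}
    (hC : IsClosed C) (h0 : (0:ℝ) ∈ C) (h1 : (1:ℝ) ∈ C)
    (hcombo : ∀ a ∈ C, ∀ b ∈ C, q * a + (1 - q) * b ∈ C) :
    Set.Icc (0:ℝ) 1 ⊆ C := by
  intro lam hlam
  by_contra hlamC
  have hCa_ne : (C ∩ Set.Iic lam).Nonempty := ⟨0, h0, hlam.1⟩
  have hCa_bdd : BddAbove (C ∩ Set.Iic lam) := ⟨lam, fun x hx => hx.2⟩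
  have haC : sSup (C ∩ Set.Iic lam) ∈ C ∩ Set.Iic lam :=
    (hC.inter isClosed_Iic).csSup_mem hCa_ne hCa_bdd
  set a := sSup (C ∩ Set.Iic lam) with ha
  have halam : a < lam := lt_of_le_of_ne haC.2 (fun h => hlamC (h ▸ haC.1))
  have hCb_ne : (C ∩ Set.Ici lam).Nonempty := ⟨1, h1, hlam.2⟩
  have hCb_bdd : BddBelow (C ∩ Set.Ici lam) := ⟨lam, fun x hx => hx.2⟩
  have hbC : sInf (C ∩ Set.Ici lam) ∈ C ∩ Set.Ici lam :=
    (hC.inter isClosed_Ici).csInf_mem hCb_ne hCb_bdd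
  set b := sInf (C ∩ Set.Ici lam) with hb
  have hblam : lam < b := lt_of_le_of_ne hbC.2 (fun h => hlamC (by rw [h]; exact hbC.1))
  have hcC : q * a + (1 - q) * b ∈ C := hcombo a haC.1 b hbC.1
  have hab : a < b := lt_trans halam hblam
  have hac : a < q * a + (1 - q) * b := by nlinarith
  have hcb : q * a + (1 - q) * b < b := by nlinarith
  rcases le_or_gt (q * a + (1 - q) * b) lam with h | h
  · have : q * a + (1 - q) * b ≤ a := le_csSup hCa_bdd ⟨hcC, h⟩
    linarith
  · have : b ≤ q * a + (1 - q) * b := csInf_le hCb_bdd ⟨hcC, le_of_lt h⟩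
    linarith

/-- The closure of a set closed under `q`-combinations is closed under `q`-combinations. -/
lemma aux_closure_combo {q : ℝ} {D : Set ℝ}
    (hcombo : ∀ a ∈ D, ∀ b ∈ D, q * a + (1 - q) * b ∈ D) :
    ∀ a ∈ closure D, ∀ b ∈ closure D, q * a + (1 - q) * b ∈ closure D := by
  intro a ha b hb
  rcases mem_closure_iff_seq_limit.1 ha with ⟨u, hu, hua⟩
  rcases mem_closure_iff_seq_limit.1 hb with ⟨v, hv, hvb⟩
  have htend : Filter.Tendsto (fun m => q * u m + (1 - q) * v m) Filter.atTop
      (nhds (q * a + (1 - q) * b)) := (hua.const_mul q).add (hvb.const_mul (1 - q))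
  exact mem_closure_of_tendsto htend
    (Filter.Eventually.of_forall fun m => hcombo _ (hu m) _ (hv m))

set_option maxHeartbeats 1000000 in
/-- if the certainty equivalent `π` under a differentiable, strictly increasing
(`U' > 0`), concave utility `U` (i.e. `U(π(K)) = Σ_y p_y U(K_y)`) is translation-invariant, then
the marginal utility is exponential: `U'(x) = U'(0) e^{−γ x}` for some `γ ≥ 0`. -/
theorem stmt_10 (n : ℕ) (hn : 2 ≤ n)
    (p : Fin n → ℝ) (hp : ∀ y, 0 < p y) (hpsum : ∑ y, p y = 1)
    (U : ℝ → ℝ) (hU : Differentiable ℝ U) (hU' : ∀ x, 0 < deriv U x)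
    (hUconc : ConcaveOn ℝ Set.univ U)
    (π : (Fin n → ℝ) → ℝ)
    (hπ : ∀ K : Fin n → ℝ, U (π K) = ∑ y, p y * U (K y))
    (hti : ∀ (K : Fin n → ℝ) (a : ℝ), π (fun y => K y + a) = π K + a) :
    ∃ γ : ℝ, 0 ≤ γ ∧ ∀ x : ℝ, deriv U x = deriv U 0 * Real.exp (-γ * x) := by
  classical
  haveI : NeZero n := ⟨by omega⟩
  set f : ℝ → ℝ := deriv U with hfdef
  clear_value f
  have hUsm : StrictMono U := strictMono_of_deriv_pos (fun x => hfdef ▸ hU' x)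
  have hfanti : Antitone f := by
    have h := hUconc.antitoneOn_deriv (fun x _ => (hU x))
    intro x y hxy
    rw [hfdef]
    exact h (by simp) (by simp) hxy
  set q : ℝ := p 0 with hqdef
  clear_value q
  have hq0 : 0 < q := hqdef ▸ hp 0
  -- the index 1 exists and differs from 0
  have hi1 : (1 : ℕ) < n := by omega
  set i1 : Fin n := ⟨1, hi1⟩ with hi1def
  have hi1ne : i1 ≠ 0 := by
    simp [hi1def, Fin.ext_iff, Fin.val_zero]
  have herase : ∑ i ∈ Finset.univ.erase (0 : Fin n), p i = 1 - q := by
    rw [Finset.sum_erase_eq_sub (Finset.mem_univ 0), hpsum, hqdef]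
  have hq1 : q < 1 := by
    have h1 : p i1 ≤ ∑ i ∈ Finset.univ.erase (0 : Fin n), p i :=
      Finset.single_le_sum (fun i _ => (hp i).le)
        (Finset.mem_erase.2 ⟨hi1ne, Finset.mem_univ _⟩)
    have := hp i1
    rw [herase] at h1
    linarith
  -- sum over a two-valued payoff
  have hsum : ∀ A B : ℝ, ∑ y, p y * U (if y = 0 then A else B) = q * U A + (1 - q) * U B := by
    intro A B
    rw [← Finset.add_sum_erase _ _ (Finset.mem_univ (0 : Fin n))]
    have h1 : ∀ i ∈ Finset.univ.erase (0 : Fin n),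
        p i * U (if i = 0 then A else B) = p i * U B := by
      intro i hi
      rw [if_neg (Finset.ne_of_mem_erase hi)]
    rw [Finset.sum_congr rfl h1, ← Finset.sum_mul, herase, if_pos rfl, hqdef]
  -- the two-point certainty equivalent
  set M : ℝ → ℝ → ℝ := fun w1 w2 => π (fun i => if i = 0 then w1 else w2) with hMdef
  have keyU : ∀ w1 w2 a : ℝ, U (M w1 w2 + a) = q * U (w1 + a) + (1 - q) * U (w2 + a) := by
    intro w1 w2 a
    have h1 : (fun i : Fin n => (if i = 0 then w1 else w2) + a)
        = (fun i : Fin n => if i = 0 then w1 + a else w2 + a) := by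
      funext i; by_cases h : i = 0 <;> simp [h]
    have h2 := hti (fun i => if i = 0 then w1 else w2) a
    rw [h1] at h2
    calc U (M w1 w2 + a) = U (π (fun i => if i = 0 then w1 + a else w2 + a)) := by
          rw [h2]
      _ = ∑ y, p y * U (if y = 0 then w1 + a else w2 + a) := hπ _
      _ = q * U (w1 + a) + (1 - q) * U (w2 + a) := hsum _ _
  have keyU0 : ∀ w1 w2 : ℝ, U (M w1 w2) = q * U w1 + (1 - q) * U w2 := by
    intro w1 w2; simpa using keyU w1 w2 0
  -- differentiating the translation identity at a = 0
  have keyf : ∀ w1 w2 : ℝ, f (M w1 w2) = q * f w1 + (1 - q) * f w2 := by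
    intro w1 w2
    have hshift : ∀ c : ℝ, HasDerivAt (fun a : ℝ => U (c + a)) (f c) 0 := by
      intro c
      rw [hfdef]
      have hg : HasDerivAt (fun a : ℝ => c + a) 1 0 := by
        simpa using (hasDerivAt_id (0 : ℝ)).const_add c
      have h := ((hU (c + 0)).hasDerivAt).comp 0 hg
      simp only [add_zero, mul_one] at h; exact h
    have hL : HasDerivAt (fun a : ℝ => U (M w1 w2 + a)) (f (M w1 w2)) 0 := hshift _
    have hR : HasDerivAt (fun a : ℝ => q * U (w1 + a) + (1 - q) * U (w2 + a))
        (q * f w1 + (1 - q) * f w2) 0 := ((hshift w1).const_mul q).add ((hshift w2).const_mul (1 - q))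
    have hfun : (fun a : ℝ => U (M w1 w2 + a))
        = (fun a : ℝ => q * U (w1 + a) + (1 - q) * U (w2 + a)) := funext (keyU w1 w2)
    rw [hfun] at hL
    exact hL.unique hR
  -- collinearity of (U, f) on any interval
  have main : ∀ s t x : ℝ, s < t → s ≤ x → x ≤ t →
      f x * (U t - U s) = f t * (U t - U s) + (U t - U x) * (f s - f t) := by
    intro s t x hst hsx hxt
    have he : 0 < U t - U s := sub_pos.2 (hUsm hst)
    set D : Set ℝ := {θ : ℝ | ∃ w : ℝ,
      U w = θ * U s + (1 - θ) * U t ∧ f w = θ * f s + (1 - θ) * f t} with hDdef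
    have h0D : (0:ℝ) ∈ D := ⟨t, by norm_num, by norm_num⟩
    have h1D : (1:ℝ) ∈ D := ⟨s, by norm_num, by norm_num⟩
    have hcomboD : ∀ a ∈ D, ∀ b ∈ D, q * a + (1 - q) * b ∈ D := by
      rintro a ⟨w1, hw1U, hw1f⟩ b ⟨w2, hw2U, hw2f⟩
      exact ⟨M w1 w2, by rw [keyU0, hw1U, hw2U]; ring, by rw [keyf, hw1f, hw2f]; ring⟩
    have hdense : Set.Icc (0:ℝ) 1 ⊆ closure D :=
      aux_combo_closed hq0 hq1 isClosed_closure (subset_closure h0D) (subset_closure h1D)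
        (aux_closure_combo hcomboD)
    set θx : ℝ := (U t - U x) / (U t - U s) with hθxdef
    have hθxe : θx * (U t - U s) = U t - U x := by rw [hθxdef]; exact div_mul_cancel₀ _ he.ne'
    have hUx1 : U x ≤ U t := hUsm.monotone hxt
    have hUx0 : U s ≤ U x := hUsm.monotone hsx
    have hθ0 : 0 ≤ θx := by rw [hθxdef]; exact div_nonneg (by linarith) he.le
    have hθ1 : θx ≤ 1 := by rw [hθxdef, div_le_one he]; linarith
    clear_value θx
    have hfsft : f t ≤ f s := hfanti hst.le
    have hPt : ∀ θ : ℝ, θ ∈ D →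
        (θx ≤ θ → f x ≤ f t + θ * (f s - f t)) ∧
        (θ ≤ θx → f t + θ * (f s - f t) ≤ f x) := by
      rintro θ ⟨w, hwU, hwf⟩
      have hUw : U w = U t - θ * (U t - U s) := by rw [hwU]; ring
      have hfw : f w = f t + θ * (f s - f t) := by rw [hwf]; ring
      constructor
      · intro hθ
        have h1 : U w ≤ U x := by
          have h2 : θx * (U t - U s) ≤ θ * (U t - U s) :=
            mul_le_mul_of_nonneg_right hθ he.le
          rw [hUw]; linarith [hθxe]
        have h3 : w ≤ x := hUsm.le_iff_le.1 h1
        have h4 : f x ≤ f w := hfanti h3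
        rw [hfw] at h4; exact h4
      · intro hθ
        have h1 : U x ≤ U w := by
          have h2 : θ * (U t - U s) ≤ θx * (U t - U s) :=
            mul_le_mul_of_nonneg_right hθ he.le
          rw [hUw]; linarith [hθxe]
        have h3 : x ≤ w := hUsm.le_iff_le.1 h1
        have h4 : f w ≤ f x := hfanti h3
        rw [hfw] at h4; exact h4
    clear_value D
    have hub : f x ≤ f t + θx * (f s - f t) := by
      rcases eq_or_lt_of_le hθ1 with h | h
      · -- θx = 1, so x = s
        have hUxs : U x = U s := by
          have h2 := hθxe
          rw [h] at h2
          nlinarith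
        have hxs : x = s := hUsm.injective hUxs
        rw [hxs, h]; linarith
      · refine le_of_forall_pos_le_add fun ε hε => ?_
        set δ : ℝ := min (ε / (f s - f t + 1)) (1 - θx) with hδdef
        have hδ0 : 0 < δ := lt_min (div_pos hε (by linarith)) (by linarith)
        have hδle : δ ≤ 1 - θx := min_le_right _ _
        have hmem : θx + δ/2 ∈ Set.Icc (0:ℝ) 1 := ⟨by linarith, by linarith⟩
        have hcl := hdense hmem
        rw [Metric.mem_closure_iff] at hcl
        obtain ⟨θ', hθ'D, hdist⟩ := hcl (δ/2) (by linarith)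
        rw [Real.dist_eq] at hdist
        obtain ⟨hd1, hd2⟩ := abs_lt.1 hdist
        have hgt : θx ≤ θ' := by linarith
        have hlt : θ' ≤ θx + δ := by linarith
        have hkey := (hPt θ' hθ'D).1 hgt
        have hδε : δ * (f s - f t + 1) ≤ ε := by
          have h1 : δ ≤ ε / (f s - f t + 1) := min_le_left _ _
          calc δ * (f s - f t + 1) ≤ (ε / (f s - f t + 1)) * (f s - f t + 1) :=
                mul_le_mul_of_nonneg_right h1 (by linarith)
            _ = ε := div_mul_cancel₀ _ (by linarith)
        nlinarith [mul_le_mul_of_nonneg_right hlt (sub_nonneg.2 hfsft)]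
    have hlb : f t + θx * (f s - f t) ≤ f x := by
      rcases (eq_or_lt_of_le hθ0).symm with h | h
      · refine le_of_forall_pos_le_add fun ε hε => ?_
        set δ : ℝ := min (ε / (f s - f t + 1)) θx with hδdef
        have hδ0 : 0 < δ := lt_min (div_pos hε (by linarith)) h
        have hδle : δ ≤ θx := min_le_right _ _
        have hmem : θx - δ/2 ∈ Set.Icc (0:ℝ) 1 := ⟨by linarith, by linarith⟩
        have hcl := hdense hmem
        rw [Metric.mem_closure_iff] at hcl
        obtain ⟨θ', hθ'D, hdist⟩ := hcl (δ/2) (by linarith)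
        rw [Real.dist_eq] at hdist
        obtain ⟨hd1, hd2⟩ := abs_lt.1 hdist
        have hgt : θ' ≤ θx := by linarith
        have hlt : θx - δ ≤ θ' := by linarith
        have hkey := (hPt θ' hθ'D).2 hgt
        have hδε : δ * (f s - f t + 1) ≤ ε := by
          have h1 : δ ≤ ε / (f s - f t + 1) := min_le_left _ _
          calc δ * (f s - f t + 1) ≤ (ε / (f s - f t + 1)) * (f s - f t + 1) :=
                mul_le_mul_of_nonneg_right h1 (by linarith)
            _ = ε := div_mul_cancel₀ _ (by linarith)
        nlinarith [mul_le_mul_of_nonneg_right hlt (sub_nonneg.2 hfsft)]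
      · -- θx = 0, so x = t
        have hUxt : U x = U t := by
          have h2 := hθxe
          rw [← h] at h2
          nlinarith
        have hxt' : x = t := hUsm.injective hUxt
        rw [hxt', ← h]; simp
    have hfx : f x = f t + θx * (f s - f t) := le_antisymm hub hlb
    linear_combination (f s - f t) * hθxe + (U t - U s) * hfx
  -- f is an affine function of U
  have hU10 : (0:ℝ) < U 1 - U 0 := sub_pos.2 (hUsm zero_lt_one)
  set β : ℝ := (f 1 - f 0) / (U 1 - U 0) with hβdef
  clear_value β
  have hfeq : ∀ x : ℝ, f x = f 0 + β * (U x - U 0) := by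
    intro x
    set s : ℝ := min x 0 with hsdef
    set t : ℝ := max x 1 with htdef
    have hsx' : s ≤ x := min_le_left x 0
    have hs0 : s ≤ 0 := min_le_right x 0
    have htx : x ≤ t := le_max_left x 1
    have ht1 : (1:ℝ) ≤ t := le_max_right x 1
    clear_value s t
    have hst : s < t := lt_of_le_of_lt hs0 (lt_of_lt_of_le zero_lt_one ht1)
    have he : 0 < U t - U s := sub_pos.2 (hUsm hst)
    have h0 := main s t 0 hst hs0 (le_trans zero_le_one ht1)
    have h1 := main s t 1 hst (le_trans hs0 zero_le_one) ht1
    have hx := main s t x hst hsx' htx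
    have hA : (f x - f 0) * (U t - U s) = (U 0 - U x) * (f s - f t) := by
      linear_combination hx - h0
    have hB : (f 1 - f 0) * (U t - U s) = (U 0 - U 1) * (f s - f t) := by
      linear_combination h1 - h0
    have hC : ((f x - f 0) * (U 1 - U 0)) * (U t - U s)
        = ((f 1 - f 0) * (U x - U 0)) * (U t - U s) := by
      linear_combination (U 1 - U 0) * hA - (U x - U 0) * hB
    have hD : (f x - f 0) * (U 1 - U 0) = (f 1 - f 0) * (U x - U 0) :=
      mul_right_cancel₀ he.ne' hC
    rw [hβdef]
    field_simp
    linear_combination hD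
  have hβ0 : β ≤ 0 := by
    have h10 : f 1 ≤ f 0 := hfanti zero_le_one
    rw [hβdef]
    exact div_nonpos_of_nonpos_of_nonneg (by linarith) hU10.le
  -- solve the ODE f' = β f
  set α : ℝ := f 0 - β * U 0 with hαdef
  clear_value α
  have hfunext : f = fun y => α + β * U y := by
    funext y
    rw [hfeq y, hαdef]; ring
  have hfd : Differentiable ℝ f := by
    rw [hfunext]
    exact (differentiable_const α).add (hU.const_mul β)
  have hf' : ∀ x : ℝ, deriv f x = β * f x := by
    intro x
    calc deriv f x = deriv (fun y => α + β * U y) x := by rw [← hfunext]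
      _ = β * deriv U x := by
          rw [deriv_const_add]
          exact deriv_const_mul β (hU x)
      _ = β * f x := by rw [hfdef]
  have hg : ∀ x : ℝ, f x * Real.exp (-β * x) = f 0 := by
    have hgd : Differentiable ℝ (fun z : ℝ => f z * Real.exp (-β * z)) :=
      hfd.mul (Real.differentiable_exp.comp (differentiable_id.const_mul (-β)))
    have hdg : ∀ y : ℝ, deriv (fun z : ℝ => f z * Real.exp (-β * z)) y = 0 := by
      intro y
      have h1 : HasDerivAt f (β * f y) y := by
        rw [← hf' y]; exact (hfd y).hasDerivAt
      have hlin : HasDerivAt (fun z : ℝ => -β * z) (-β) y := by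
        simpa using (hasDerivAt_id y).const_mul (-β)
      have h2 : HasDerivAt (fun z : ℝ => Real.exp (-β * z)) (Real.exp (-β * y) * (-β)) y :=
        (Real.hasDerivAt_exp (-β * y)).comp y hlin
      have h3 := h1.mul h2
      rw [(show HasDerivAt (fun z : ℝ => f z * Real.exp (-β * z)) _ y from h3).deriv]
      ring
    intro x
    have := is_const_of_deriv_eq_zero hgd hdg x 0
    simpa using this
  refine ⟨-β, neg_nonneg.2 hβ0, fun x => ?_⟩
  rw [neg_neg, ← hg x, mul_assoc, ← Real.exp_add]
  have hz : -β * x + β * x = 0 := by ring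
  rw [hz, Real.exp_zero, mul_one]
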